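/- arXiv:1408.6211 — 3 statements merged into one kernel-verified Lean document; each statement's English description precedes it below -/
import Mathlib

section
/- Subject to the constraint 1/(q₀₀ + n₀) + 1/(q₀ⱼ + nⱼ) = v/V for all j = 1,…,k (with all nⱼ equal amounts of posterior information for the experimental arms), the total sample size n₀ + n₁ + … + n_k is minimized by n_j = (1 + k^{-1/2})V/v − q₀ⱼ for j = 1,…,k and n₀ = (1 + k^{1/2})V/v − q₀₀, yielding allocation ratio (n₀+q₀₀)/(nⱼ+q₀ⱼ) = √k. -/
open Real

lemma key_ineq (k : ℕ) (s c t : ℝ) (hs : 0 < s) (hs2 : s ^ 2 = (k : ℝ))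
    (hc : 0 < c) (ht : 1 < c * t) :
    (1 + s) / c + (k : ℝ) * ((1 + 1 / s) / c) ≤ t + (k : ℝ) * (t / (c * t - 1)) := by
  have hs' : s ≠ 0 := ne_of_gt hs
  have hc' : c ≠ 0 := ne_of_gt hc
  have hd : c * t - 1 > 0 := by linarith
  have hd' : c * t - 1 ≠ 0 := ne_of_gt hd
  have key : t + (k : ℝ) * (t / (c * t - 1)) -
      ((1 + s) / c + (k : ℝ) * ((1 + 1 / s) / c)) =
      c * (t - (1 + s) / c) ^ 2 / (c * t - 1) := by
    rw [← hs2]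
    rw [eq_div_iff hd']
    field_simp
    linear_combination (t * c * s ^ 2) * inv_mul_cancel₀ hd'
  nlinarith [div_nonneg (mul_nonneg hc.le (sq_nonneg (t - (1 + s) / c))) hd.le]

/-- Subject to the information constraints `1/(q₀₀ + n₀) + 1/(q₀ⱼ + nⱼ) = v/V` for each of the
`k` experimental arms, the total sample size is minimized by
`nⱼ = (1 + k^{-1/2}) V/v − q₀ⱼ` and `n₀ = (1 + k^{1/2}) V/v − q₀₀`, giving allocation ratio
`(n₀ + q₀₀)/(nⱼ + q₀ⱼ) = √k`. -/
theorem optimal_sample_sizes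
    (k : ℕ) (hk : 1 ≤ k) (v V : ℝ) (hv : 0 < v) (hV : 0 < V)
    (q : Fin (k + 1) → ℝ) (hq : ∀ j, 0 ≤ q j)
    (nopt : Fin (k + 1) → ℝ)
    (h0 : nopt 0 = (1 + Real.sqrt k) * V / v - q 0)
    (hjdef : ∀ j : Fin k, nopt j.succ = (1 + (Real.sqrt k)⁻¹) * V / v - q j.succ)
    (hpos : ∀ j, 0 < nopt j) :
    (∀ j : Fin k, 1 / (q 0 + nopt 0) + 1 / (q j.succ + nopt j.succ) = v / V) ∧
    (∀ j : Fin k, (nopt 0 + q 0) / (nopt j.succ + q j.succ) = Real.sqrt k) ∧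
    (∀ n : Fin (k + 1) → ℝ, (∀ j, 0 < n j) →
      (∀ j : Fin k, 1 / (q 0 + n 0) + 1 / (q j.succ + n j.succ) = v / V) →
      ∑ j, nopt j ≤ ∑ j, n j) := by
  set s := Real.sqrt k with hs_def
  have hk1 : (1 : ℝ) ≤ (k : ℝ) := by exact_mod_cast hk
  have hs1 : 1 ≤ s := by
    rw [hs_def, show (1:ℝ) = Real.sqrt 1 by simp]
    exact Real.sqrt_le_sqrt hk1
  have hs : 0 < s := lt_of_lt_of_le one_pos hs1
  have hs' : s ≠ 0 := ne_of_gt hs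
  have hs2 : s ^ 2 = (k : ℝ) := Real.sq_sqrt (by positivity)
  have hv' : v ≠ 0 := ne_of_gt hv
  have hV' : V ≠ 0 := ne_of_gt hV
  have h1s : (0:ℝ) < 1 + s := by linarith
  have e0 : q 0 + nopt 0 = (1 + s) * V / v := by rw [h0]; ring
  have ej : ∀ j : Fin k, q j.succ + nopt j.succ = (1 + 1 / s) * V / v := by
    intro j; rw [hjdef j, one_div]; ring
  refine ⟨?_, ?_, ?_⟩
  · intro j
    rw [e0, ej j]
    field_simp
    ring
  · intro j
    have e0' : nopt 0 + q 0 = (1 + s) * V / v := by rw [h0]; ring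
    have ej' : nopt j.succ + q j.succ = (1 + 1 / s) * V / v := by
      rw [hjdef j, one_div]; ring
    rw [e0', ej']
    rw [div_eq_iff (by positivity)]
    field_simp
    ring
  · intro n hn hcon
    -- it suffices to compare sums of q j + n j
    have hsum : ∀ m : Fin (k+1) → ℝ, ∑ j, m j = (∑ j, (q j + m j)) - ∑ j, q j := by
      intro m; rw [Finset.sum_add_distrib]; ring
    rw [hsum nopt, hsum n]
    have goal2 : ∑ j, (q j + nopt j) ≤ ∑ j, (q j + n j) := by
      have t := q 0 + n 0
      set c : ℝ := v / V with hc_def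
      have hc : 0 < c := by positivity
      have ht0 : 0 < q 0 + n 0 := add_pos_of_nonneg_of_pos (hq 0) (hn 0)
      -- c*(q0+n0) > 1
      have hct : 1 < c * (q 0 + n 0) := by
        have j0 : Fin k := ⟨0, hk⟩
        have hb : 0 < q j0.succ + n j0.succ :=
          add_pos_of_nonneg_of_pos (hq _) (hn _)
        have := hcon j0
        have h1 : 1 / (q 0 + n 0) < c := by
          have : 0 < 1 / (q j0.succ + n j0.succ) := by positivity
          linarith [hcon j0]
        calc (1:ℝ) = (1 / (q 0 + n 0)) * (q 0 + n 0) := by field_simp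
          _ < c * (q 0 + n 0) := by
              exact mul_lt_mul_of_pos_right h1 ht0
      have hd : 0 < c * (q 0 + n 0) - 1 := by linarith
      have hbj : ∀ j : Fin k, q j.succ + n j.succ =
          (q 0 + n 0) / (c * (q 0 + n 0) - 1) := by
        intro j
        have hb : 0 < q j.succ + n j.succ := add_pos_of_nonneg_of_pos (hq _) (hn _)
        have h := hcon j
        rw [eq_div_iff (ne_of_gt hd)]
        field_simp at h
        nlinarith [h]
      rw [Fin.sum_univ_succ, Fin.sum_univ_succ]
      have hconst : ∀ (f : Fin k → ℝ) (a : ℝ), (∀ j, f j = a) →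
          ∑ j, f j = (k : ℝ) * a := by
        intro f a hf
        rw [Finset.sum_congr rfl (fun j _ => hf j), Finset.sum_const,
          Finset.card_univ, Fintype.card_fin, nsmul_eq_mul]
      rw [hconst (fun j => q (Fin.succ j) + nopt (Fin.succ j)) _ (fun j => ej j),
        hconst (fun j => q (Fin.succ j) + n (Fin.succ j)) _ (fun j => hbj j), e0]
      have he1 : (1 + s) * V / v = (1 + s) / c := by
        rw [hc_def]; field_simp
      have he2 : (1 + 1 / s) * V / v = (1 + 1 / s) / c := by
        rw [hc_def]; field_simp
      rw [he1, he2]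
      exact key_ineq k s c (q 0 + n 0) hs hs2 hc hct
    linarith
end

section
/- If μ₀ ~ N(μ₁₀, (q₁₀v)⁻¹) independently of μ_j ~ N(μ_{1j}, (q_{1j}v)⁻¹), j = 1,…,k, and δ_j = μ_j − μ₀, then P(δ_j < δ* for all j) = ∫ [∏_{j=1}^k Φ(u√(q_{1j}/q₁₀) + (δ* − δ_{1j})√(q_{1j}v))] φ(u) du, where δ_{1j} = μ_{1j} − μ₁₀. -/
open MeasureTheory ProbabilityTheory Real

/-- Standard normal density. -/
noncomputable def stdNormalPdf (u : ℝ) : ℝ :=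
  (Real.sqrt (2 * π))⁻¹ * Real.exp (-u ^ 2 / 2)

/-- Standard normal cumulative distribution function `Φ`. -/
noncomputable def stdNormalCdf (x : ℝ) : ℝ :=
  ∫ u in Set.Iic x, stdNormalPdf u

lemma stdNormalPdf_eq : stdNormalPdf = gaussianPDFReal 0 1 := by
  funext x
  simp [stdNormalPdf, gaussianPDFReal]

lemma stdNormalPdf_nonneg (x : ℝ) : 0 ≤ stdNormalPdf x := by
  rw [stdNormalPdf_eq]; exact gaussianPDFReal_nonneg 0 1 x

lemma stdNormalCdf_nonneg (x : ℝ) : 0 ≤ stdNormalCdf x :=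
  setIntegral_nonneg measurableSet_Iic fun u _ => stdNormalPdf_nonneg u

lemma monotone_stdNormalCdf : Monotone stdNormalCdf := by
  intro a b hab
  refine setIntegral_mono_set ?_ ?_ ?_
  · rw [stdNormalPdf_eq]; exact (integrable_gaussianPDFReal 0 1).integrableOn
  · exact Filter.Eventually.of_forall fun u => stdNormalPdf_nonneg u
  · exact Filter.Eventually.of_forall (Set.Iic_subset_Iic.mpr hab)

lemma measurable_stdNormalCdf : Measurable stdNormalCdf :=
  monotone_stdNormalCdf.measurable

lemma stdNormal_Iio (x : ℝ) :
    gaussianReal 0 1 (Set.Iio x) = ENNReal.ofReal (stdNormalCdf x) := by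
  rw [gaussianReal_apply_eq_integral 0 one_ne_zero, stdNormalCdf,
    integral_Iic_eq_integral_Iio, stdNormalPdf_eq]

lemma gauss_map {w : ℝ} (hw : 0 < w) (m' : ℝ) :
    gaussianReal m' (Real.toNNReal w⁻¹)
      = (gaussianReal 0 1).map (fun u => Real.sqrt w⁻¹ * u + m') := by
  have h1 : (fun u : ℝ => Real.sqrt w⁻¹ * u + m')
      = (fun x : ℝ => x + m') ∘ (fun u : ℝ => Real.sqrt w⁻¹ * u) := rfl
  rw [h1, ← Measure.map_map (measurable_id'.add_const _) (measurable_id'.const_mul _),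
    gaussianReal_map_const_mul, gaussianReal_map_add_const]
  have h2 : (⟨(Real.sqrt w⁻¹) ^ 2, sq_nonneg _⟩ * 1 : NNReal) = Real.toNNReal w⁻¹ := by
    ext
    simp [Real.sq_sqrt (le_of_lt (inv_pos.mpr hw)), Real.toNNReal,
      max_eq_left (le_of_lt (inv_pos.mpr hw)), Real.sq_sqrt hw.le]
    exact (congrArg (fun x : NNReal => (x : ℝ)) (mul_one _)).trans rfl
  rw [mul_zero, zero_add]; congr 1; exact h2.symm

lemma gauss_Iio {w : ℝ} (hw : 0 < w) (m' t : ℝ) :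
    gaussianReal m' (Real.toNNReal w⁻¹) (Set.Iio t)
      = ENNReal.ofReal (stdNormalCdf ((t - m') * Real.sqrt w)) := by
  have hs : 0 < Real.sqrt w⁻¹ := Real.sqrt_pos.mpr (inv_pos.mpr hw)
  rw [gauss_map hw, Measure.map_apply ((measurable_id'.const_mul _).add_const _) measurableSet_Iio]
  have hp : (fun u : ℝ => Real.sqrt w⁻¹ * u + m') ⁻¹' Set.Iio t
      = Set.Iio ((t - m') * Real.sqrt w) := by
    ext u
    simp only [Set.mem_preimage, Set.mem_Iio]
    have h0 : 0 < Real.sqrt w := Real.sqrt_pos.mpr hw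
    have h1 : Real.sqrt w⁻¹ * Real.sqrt w = 1 := by
      rw [Real.sqrt_inv]; field_simp
    have h2 : Real.sqrt w⁻¹ * u * Real.sqrt w = u := by
      rw [mul_right_comm, h1, one_mul]
    constructor
    · intro h
      have := mul_lt_mul_of_pos_right (show Real.sqrt w⁻¹ * u < t - m' by linarith) h0
      rw [h2] at this; linarith
    · intro h
      have := mul_lt_mul_of_pos_left h hs
      rw [show Real.sqrt w⁻¹ * ((t - m') * Real.sqrt w) = t - m' by rw [mul_left_comm, h1, mul_one]] at this
      linarith
  rw [hp, stdNormal_Iio]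

/-- If `μ₀ ~ N(μ₁₀, (q₁₀ v)⁻¹)` independently of `μ_j ~ N(μ_{1j}, (q_{1j} v)⁻¹)` for
`j = 1,…,k`, and `δ_j = μ_j − μ₀`, then
`P(∀ j, δ_j < δ*) = ∫ ∏_j Φ(u √(q_{1j}/q₁₀) + (δ* − δ_{1j}) √(q_{1j} v)) φ(u) du`,
where `δ_{1j} = μ_{1j} − μ₁₀`. -/
theorem gamma_probability_formula
    (k : ℕ) {Ω : Type*} [MeasureSpace Ω] [IsProbabilityMeasure (ℙ : Measure Ω)]
    (v : ℝ) (hv : 0 < v) (q : Fin (k + 1) → ℝ) (hq : ∀ j, 0 < q j)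
    (m : Fin (k + 1) → ℝ) (μ : Fin (k + 1) → Ω → ℝ)
    (hmeas : ∀ j, Measurable (μ j))
    (hindep : iIndepFun μ ℙ)
    (hlaw : ∀ j, Measure.map (μ j) ℙ = gaussianReal (m j) (Real.toNNReal (q j * v)⁻¹))
    (δstar : ℝ) :
    (ℙ {ω | ∀ j : Fin k, μ j.succ ω - μ 0 ω < δstar}).toReal
      = ∫ u : ℝ, (∏ j : Fin k,
          stdNormalCdf (u * Real.sqrt (q j.succ / q 0)
            + (δstar - (m j.succ - m 0)) * Real.sqrt (q j.succ * v))) * stdNormalPdf u := by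
  have hqv : ∀ i, 0 < q i * v := fun i => mul_pos (hq i) hv
  set ν : Fin (k + 1) → Measure ℝ :=
    fun i => gaussianReal (m i) (Real.toNNReal (q i * v)⁻¹) with hν
  haveI hprob : ∀ i, IsProbabilityMeasure (ν i) := fun i => by
    rw [hν]; infer_instance
  haveI hsig : ∀ i, SigmaFinite (ν i) := fun i => by
    have := hprob i; infer_instance
  -- step 1 : joint law is the product measure
  have hJmeas : Measurable (fun ω (i : Fin (k + 1)) => μ i ω) := measurable_pi_iff.mpr hmeas
  have hmap : Measure.map (fun ω (i : Fin (k + 1)) => μ i ω) ℙ = Measure.pi ν := by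
    refine (Measure.pi_eq fun s hs => ?_).symm
    rw [Measure.map_apply hJmeas (MeasurableSet.univ_pi hs)]
    have hpre : ((fun ω (i : Fin (k + 1)) => μ i ω) ⁻¹' Set.pi Set.univ s)
        = ⋂ i, μ i ⁻¹' s i := by
      ext ω; simp [Set.mem_pi]
    rw [hpre, hindep.meas_iInter fun i => ⟨s i, hs i, rfl⟩]
    refine Finset.prod_congr rfl fun i _ => ?_
    show ℙ (μ i ⁻¹' s i) = gaussianReal (m i) (Real.toNNReal (q i * v)⁻¹) (s i)
    rw [← hlaw i, Measure.map_apply (hmeas i) (hs i)]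
  -- step 2 : express the probability using the product measure
  have hS : MeasurableSet {x : Fin (k + 1) → ℝ | ∀ j : Fin k, x j.succ - x 0 < δstar} := by
    rw [Set.setOf_forall]
    refine MeasurableSet.iInter fun j => ?_
    exact measurableSet_lt
      ((show Measurable fun x : Fin (k + 1) → ℝ => x j.succ from measurable_pi_apply _).sub
        (show Measurable fun x : Fin (k + 1) → ℝ => x 0 from measurable_pi_apply _))
      measurable_const
  have h1 : ℙ {ω | ∀ j : Fin k, μ j.succ ω - μ 0 ω < δstar}
      = Measure.pi ν {x | ∀ j : Fin k, x j.succ - x 0 < δstar} := by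
    rw [← hmap, Measure.map_apply hJmeas hS]; rfl
  -- step 3 : split off the first coordinate
  set T : Set (ℝ × (Fin k → ℝ)) := {p | ∀ j : Fin k, p.2 j - p.1 < δstar} with hT
  have hTmeas : MeasurableSet T := by
    rw [hT, Set.setOf_forall]
    refine MeasurableSet.iInter fun j => ?_
    exact measurableSet_lt
      ((show Measurable fun p : ℝ × (Fin k → ℝ) => p.2 j from
          (measurable_pi_apply j).comp measurable_snd).sub measurable_fst)
      measurable_const
  have hMP := measurePreserving_piFinSuccAbove ν 0
  have h2 : Measure.pi ν {x | ∀ j : Fin k, x j.succ - x 0 < δstar}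
      = ((ν 0).prod (Measure.pi fun j => ν ((0 : Fin (k + 1)).succAbove j))) T := by
    rw [← hMP.measure_preimage_equiv T]
    congr 1
  -- step 4 : Fubini
  have h3 : ((ν 0).prod (Measure.pi fun j => ν ((0 : Fin (k + 1)).succAbove j))) T
      = ∫⁻ x, ∏ j : Fin k, ν j.succ (Set.Iio (x + δstar)) ∂(ν 0) := by
    rw [Measure.prod_apply hTmeas]
    congr 1; funext x
    have hxy : (Prod.mk x ⁻¹' T) = Set.pi Set.univ fun _ : Fin k => Set.Iio (x + δstar) := by
      ext y; simp [T, sub_lt_iff_lt_add']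
    rw [hxy, Measure.pi_pi]
    exact Finset.prod_congr rfl fun j _ => by rw [Fin.zero_succAbove]
  -- step 5 : gaussian cdf rewriting
  set F : ℝ → ℝ := fun x =>
    ∏ j : Fin k, stdNormalCdf ((x + δstar - m j.succ) * Real.sqrt (q j.succ * v)) with hF
  have hFnonneg : ∀ x, 0 ≤ F x := fun x =>
    Finset.prod_nonneg fun j _ => stdNormalCdf_nonneg _
  have hFmeas : Measurable F := by
    rw [hF]
    exact Finset.measurable_prod _ fun j _ =>
      measurable_stdNormalCdf.comp (((measurable_id.add_const _).sub_const _).mul_const _)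
  have h4 : ∀ x : ℝ, (∏ j : Fin k, ν j.succ (Set.Iio (x + δstar)))
      = ENNReal.ofReal (F x) := by
    intro x
    rw [hF, ENNReal.ofReal_prod_of_nonneg fun j _ => stdNormalCdf_nonneg _]
    refine Finset.prod_congr rfl fun j _ => ?_
    show gaussianReal (m j.succ) (Real.toNNReal (q j.succ * v)⁻¹) (Set.Iio (x + δstar)) = _
    exact gauss_Iio (hqv j.succ) (m j.succ) (x + δstar)
  -- step 6 : change of variables in the outer integral
  have h5 : ∫⁻ x, ENNReal.ofReal (F x) ∂(ν 0)
      = ∫⁻ u, ENNReal.ofReal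
          (F (Real.sqrt (q 0 * v)⁻¹ * u + m 0) * stdNormalPdf u) := by
    have hg : Measurable fun u : ℝ => Real.sqrt (q 0 * v)⁻¹ * u + m 0 := by fun_prop
    have hf : Measurable fun x : ℝ => ENNReal.ofReal (F x) := hFmeas.ennreal_ofReal
    calc ∫⁻ x, ENNReal.ofReal (F x) ∂(ν 0)
        = ∫⁻ x, ENNReal.ofReal (F x)
            ∂((gaussianReal 0 1).map (fun u => Real.sqrt (q 0 * v)⁻¹ * u + m 0)) := by
          rw [show (ν 0 : Measure ℝ) = gaussianReal (m 0) (Real.toNNReal (q 0 * v)⁻¹) from rfl,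
            gauss_map (hqv 0) (m 0)]
      _ = ∫⁻ u, ENNReal.ofReal (F (Real.sqrt (q 0 * v)⁻¹ * u + m 0)) ∂(gaussianReal 0 1) :=
          lintegral_map hf hg
      _ = ∫⁻ u, ENNReal.ofReal (F (Real.sqrt (q 0 * v)⁻¹ * u + m 0) * stdNormalPdf u) := by
          rw [gaussianReal_of_var_ne_zero 0 one_ne_zero,
            lintegral_withDensity_eq_lintegral_mul _ (measurable_gaussianPDF 0 1)
              (show Measurable fun u : ℝ =>
                  ENNReal.ofReal (F (Real.sqrt (q 0 * v)⁻¹ * u + m 0)) from hf.comp hg)]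
          refine lintegral_congr fun u => ?_
          simp only [Pi.mul_apply, Function.comp_apply, gaussianPDF, ← stdNormalPdf_eq]
          rw [← ENNReal.ofReal_mul (stdNormalPdf_nonneg u), mul_comm]
  -- step 7 : identify the integrand
  have key : ∀ u : ℝ, F (Real.sqrt (q 0 * v)⁻¹ * u + m 0)
      = ∏ j : Fin k, stdNormalCdf (u * Real.sqrt (q j.succ / q 0)
          + (δstar - (m j.succ - m 0)) * Real.sqrt (q j.succ * v)) := by
    intro u
    rw [hF]
    refine Finset.prod_congr rfl fun j _ => ?_
    congr 1
    have hsc : Real.sqrt (q 0 * v)⁻¹ * Real.sqrt (q j.succ * v)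
        = Real.sqrt (q j.succ / q 0) := by
      rw [← Real.sqrt_mul (le_of_lt (inv_pos.mpr (hqv 0)))]
      congr 1
      have hv0 : v ≠ 0 := ne_of_gt hv
      have hq0 : q 0 ≠ 0 := ne_of_gt (hq 0)
      field_simp
    rw [← hsc]; ring
  -- put everything together
  rw [h1, h2, h3,
    show (∫⁻ x, ∏ j : Fin k, ν j.succ (Set.Iio (x + δstar)) ∂(ν 0))
      = ∫⁻ x, ENNReal.ofReal (F x) ∂(ν 0) from lintegral_congr fun x => h4 x, h5]
  have hRmeas : Measurable fun u : ℝ => (∏ j : Fin k,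
      stdNormalCdf (u * Real.sqrt (q j.succ / q 0)
        + (δstar - (m j.succ - m 0)) * Real.sqrt (q j.succ * v))) * stdNormalPdf u := by
    refine Measurable.mul ?_ (by rw [stdNormalPdf_eq]; exact measurable_gaussianPDFReal 0 1)
    exact Finset.measurable_prod _ fun j _ =>
      measurable_stdNormalCdf.comp ((measurable_id.mul_const _).add_const _)
  rw [integral_eq_lintegral_of_nonneg_ae
    (Filter.Eventually.of_forall fun u =>
      mul_nonneg (Finset.prod_nonneg fun j _ => stdNormalCdf_nonneg _) (stdNormalPdf_nonneg u))
    hRmeas.aestronglyMeasurable]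
  congr 1
  refine lintegral_congr fun u => ?_
  rw [key u]
end

section
/- In the normal-gamma model, β₁ = β₀/(1 − B) where B = K/(K + J₀) ~ Beta(n/2, α₀); hence β₁ ≤ β₀/(1 − Beta(n/2, α₀, ξ)) with (prior predictive) probability ξ, where Beta(a, b, ξ) is the ξ-quantile of a Beta(a,b) distribution. -/
open MeasureTheory ProbabilityTheory Real

/-- Gamma density with shape `a` and rate `b`; `gammaPdf (ν/2) (1/2)` is the chi-squared
density with `ν` degrees of freedom. -/
noncomputable def gammaPdf (a b x : ℝ) : ℝ :=
  if 0 < x then b ^ a / Real.Gamma a * x ^ (a - 1) * Real.exp (-(b * x)) else 0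

/-- Beta density with parameters `a` and `b`. -/
noncomputable def betaPdf (a b x : ℝ) : ℝ :=
  if 0 < x ∧ x < 1 then
    Real.Gamma (a + b) / (Real.Gamma a * Real.Gamma b) * x ^ (a - 1) * (1 - x) ^ (b - 1)
  else 0

open scoped ENNReal
open Set ContinuousLinearMap

lemma gammaPdf_nonneg (a b : ℝ) (ha : 0 < a) (hb : 0 < b) (x : ℝ) : 0 ≤ gammaPdf a b x := by
  unfold gammaPdf; split_ifs <;> positivity

lemma measurable_gammaPdf (a b : ℝ) : Measurable (gammaPdf a b) := by
  unfold gammaPdf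
  exact Measurable.ite measurableSet_Ioi
    (((measurable_id'.pow_const _).const_mul _).mul (measurable_id'.const_mul _).neg.exp)
    measurable_const

lemma measurable_betaPdf (a b : ℝ) : Measurable (betaPdf a b) := by
  unfold betaPdf
  refine Measurable.ite ?_ (((measurable_id'.pow_const _).const_mul _).mul
    ((measurable_const.sub measurable_id').pow_const _)) measurable_const
  exact (measurableSet_Ioi.inter measurableSet_Iio : MeasurableSet (Ioo (0:ℝ) 1))

lemma lintegral_rpow_mul_exp {r c : ℝ} (hr : 0 < r) (hc : 0 < c) :
    ∫⁻ s in Ioi (0:ℝ), ENNReal.ofReal (s ^ (r - 1) * Real.exp (-(c * s)))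
      = ENNReal.ofReal ((1 / c) ^ r * Real.Gamma r) := by
  have hint : IntegrableOn (fun s : ℝ => s ^ (r - 1) * Real.exp (-(c * s))) (Ioi 0) := by
    have h0 : IntegrableOn (fun x : ℝ => Real.exp (-x) * x ^ (r - 1)) (Ioi 0) :=
      Real.GammaIntegral_convergent hr
    have h1 : IntegrableOn (fun x : ℝ => Real.exp (-(c * x)) * (c * x) ^ (r - 1)) (Ioi 0) := by
      have := (integrableOn_Ioi_comp_mul_left_iff
        (fun x : ℝ => Real.exp (-x) * x ^ (r - 1)) 0 hc).2 (by simpa using h0)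
      simpa using this
    have h2 := h1.const_mul (c ^ (1 - r))
    refine IntegrableOn.congr_fun h2 (fun x hx => ?_) measurableSet_Ioi
    have hx0 : (0:ℝ) < x := hx
    rw [Real.mul_rpow hc.le hx0.le]
    rw [show c ^ (1-r) * (Real.exp (-(c*x)) * (c ^ (r-1) * x ^ (r-1)))
        = (c ^ (1-r) * c ^ (r-1)) * (x ^ (r-1) * Real.exp (-(c*x))) by ring,
      ← Real.rpow_add hc]
    norm_num
  rw [← Real.integral_rpow_mul_exp_neg_mul_Ioi hr hc,
    ← ofReal_integral_eq_lintegral_ofReal hint]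
  filter_upwards [self_mem_ae_restrict (measurableSet_Ioi : MeasurableSet (Ioi (0:ℝ)))] with x hx
  have : (0:ℝ) < x := hx
  positivity

noncomputable def phiMap (q : ℝ × ℝ) : ℝ × ℝ := (q.2 * q.1, q.2 * (1 - q.1))

noncomputable def phiDer (p : ℝ × ℝ) : (ℝ × ℝ) →L[ℝ] (ℝ × ℝ) :=
  (p.2 • fst ℝ ℝ ℝ + p.1 • snd ℝ ℝ ℝ).prod
    (p.2 • ((0 : (ℝ×ℝ) →L[ℝ] ℝ) - fst ℝ ℝ ℝ) + (1 - p.1) • snd ℝ ℝ ℝ)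

lemma phiDer_det (p : ℝ × ℝ) : (phiDer p).det = p.2 := by
  have h : (phiDer p).det = LinearMap.det ((phiDer p) : (ℝ×ℝ) →ₗ[ℝ] (ℝ×ℝ)) := rfl
  rw [h, ← LinearMap.det_toMatrix (Module.Basis.finTwoProd ℝ), Matrix.det_fin_two]
  simp [LinearMap.toMatrix_apply, phiDer, Module.Basis.finTwoProd]
  ring

lemma hasFDerivAt_phiMap (p : ℝ × ℝ) : HasFDerivAt phiMap (phiDer p) p := by
  have h1 : HasFDerivAt (fun q : ℝ × ℝ => q.2 * q.1)
      (p.2 • fst ℝ ℝ ℝ + p.1 • snd ℝ ℝ ℝ) p := by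
    simpa using (show HasFDerivAt (fun q : ℝ × ℝ => q.2 * q.1) _ p from
      (hasFDerivAt_snd (𝕜 := ℝ) (E := ℝ) (F := ℝ)).mul hasFDerivAt_fst)
  have h2 : HasFDerivAt (fun q : ℝ × ℝ => q.2 * (1 - q.1))
      (p.2 • ((0 : (ℝ×ℝ) →L[ℝ] ℝ) - fst ℝ ℝ ℝ) + (1 - p.1) • snd ℝ ℝ ℝ) p := by
    have hc : HasFDerivAt (fun q : ℝ × ℝ => 1 - q.1)
        ((0 : (ℝ×ℝ) →L[ℝ] ℝ) - fst ℝ ℝ ℝ) p :=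
      (hasFDerivAt_const (1:ℝ) p).sub hasFDerivAt_fst
    simpa using (show HasFDerivAt (fun q : ℝ × ℝ => q.2 * (1 - q.1)) _ p from
      (hasFDerivAt_snd (𝕜 := ℝ) (E := ℝ) (F := ℝ)).mul hc)
  exact h1.prodMk h2

lemma key {a b : ℝ} (ha : 0 < a) (hb : 0 < b) (t : ℝ) :
    ((volume.withDensity fun x => ENNReal.ofReal (gammaPdf a (1/2) x)).prod
     (volume.withDensity fun x => ENNReal.ofReal (gammaPdf b (1/2) x)))
      {p : ℝ × ℝ | p.1 / (p.1 + p.2) ≤ t}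
    = (volume.withDensity fun x => ENNReal.ofReal (betaPdf a b x)) (Iic t) := by
  have hfm : Measurable fun x => ENNReal.ofReal (gammaPdf a (1/2) x) :=
    (measurable_gammaPdf a (1/2)).ennreal_ofReal
  have hgm : Measurable fun x => ENNReal.ofReal (gammaPdf b (1/2) x) :=
    (measurable_gammaPdf b (1/2)).ennreal_ofReal
  haveI : SigmaFinite (volume.withDensity fun x => ENNReal.ofReal (gammaPdf a (1/2) x)) :=
    SigmaFinite.withDensity_ofReal _
  haveI : SigmaFinite (volume.withDensity fun x => ENNReal.ofReal (gammaPdf b (1/2) x)) :=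
    SigmaFinite.withDensity_ofReal _
  -- densities form
  set F : ℝ × ℝ → ℝ≥0∞ :=
    fun p => ENNReal.ofReal (gammaPdf a (1/2) p.1) * ENNReal.ofReal (gammaPdf b (1/2) p.2)
    with hFdef
  have hprod : (volume.withDensity fun x => ENNReal.ofReal (gammaPdf a (1/2) x)).prod
      (volume.withDensity fun x => ENNReal.ofReal (gammaPdf b (1/2) x))
      = ((volume : Measure (ℝ × ℝ))).withDensity F := by
    rw [MeasureTheory.Measure.volume_eq_prod]
    refine Measure.prod_eq fun s u hs hu => ?_
    rw [withDensity_apply _ (hs.prod hu), ← Measure.prod_restrict,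
      lintegral_prod_mul hfm.aemeasurable hgm.aemeasurable,
      withDensity_apply _ hs, withDensity_apply _ hu]
  set S : Set (ℝ × ℝ) := {p : ℝ × ℝ | p.1 / (p.1 + p.2) ≤ t} with hSdef
  have hS : MeasurableSet S :=
    measurableSet_le (measurable_fst.div (measurable_fst.add measurable_snd)) measurable_const
  have hQ : MeasurableSet (Ioi (0:ℝ) ×ˢ Ioi (0:ℝ)) := measurableSet_Ioi.prod measurableSet_Ioi
  set A : Set ℝ := Ioo (0:ℝ) 1 ∩ Iic t with hAdef
  have hA : MeasurableSet A := measurableSet_Ioo.inter measurableSet_Iic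
  have hsrc : MeasurableSet (A ×ˢ Ioi (0:ℝ)) := hA.prod measurableSet_Ioi
  -- image identity
  have himg : phiMap '' (A ×ˢ Ioi 0) = (Ioi 0 ×ˢ Ioi 0) ∩ S := by
    ext ⟨x, y⟩
    simp only [phiMap, mem_image, mem_prod, mem_inter_iff, mem_Ioo, mem_Ioi, mem_Iic,
      mem_setOf_eq, hAdef, hSdef, Prod.exists, Prod.mk.injEq]
    constructor
    · rintro ⟨u, s, ⟨⟨⟨hu0, hu1⟩, hut⟩, hs⟩, hx, hy⟩
      subst hx; subst hy
      have h1 : (0:ℝ) < s * u := mul_pos hs hu0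
      have h2 : (0:ℝ) < s * (1 - u) := mul_pos hs (by linarith)
      refine ⟨⟨h1, h2⟩, ?_⟩
      have hsum : s * u + s * (1 - u) = s := by ring
      rw [hsum]
      rw [mul_comm, mul_div_assoc, div_self hs.ne', mul_one]
      exact hut
    · rintro ⟨⟨hx, hy⟩, hxt⟩
      have hxy : (0:ℝ) < x + y := by linarith
      refine ⟨x / (x + y), x + y, ⟨⟨⟨div_pos hx hxy, ?_⟩, hxt⟩, hxy⟩, ?_, ?_⟩
      · rw [div_lt_one hxy]; linarith
      · field_simp
      · field_simp; ring
  -- injectivity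
  have hinj : InjOn phiMap (A ×ˢ Ioi 0) := by
    rintro ⟨u, s⟩ ⟨_, hs⟩ ⟨u', s'⟩ ⟨_, hs'⟩ heq
    simp only [phiMap, Prod.mk.injEq] at heq
    obtain ⟨h1, h2⟩ := heq
    have hss : s = s' := by nlinarith [h1, h2]
    subst hss
    have hs0 : (0:ℝ) < s := hs
    have : u = u' := by
      have := mul_left_cancel₀ hs0.ne' h1
      exact this
    simp [this]
  have hderiv : ∀ q ∈ A ×ˢ Ioi (0:ℝ), HasFDerivWithinAt phiMap (phiDer q) (A ×ˢ Ioi 0) q :=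
    fun q _ => (hasFDerivAt_phiMap q).hasFDerivWithinAt
  -- compute LHS
  rw [hprod, withDensity_apply _ hS]
  have hFz : ∀ p : ℝ × ℝ, p ∉ Ioi (0:ℝ) ×ˢ Ioi (0:ℝ) → F p = 0 := by
    intro p hp
    rw [mem_prod, not_and_or] at hp
    rcases hp with h | h
    · have h0 : gammaPdf a (1/2) p.1 = 0 := by
        rw [gammaPdf, if_neg (by simpa using h)]
      simp only [hFdef, h0, ENNReal.ofReal_zero, zero_mul]
    · have h0 : gammaPdf b (1/2) p.2 = 0 := by
        rw [gammaPdf, if_neg (by simpa using h)]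
      simp only [hFdef, h0, ENNReal.ofReal_zero, mul_zero]
  calc ∫⁻ p in S, F p
      = ∫⁻ p in S, (Ioi (0:ℝ) ×ˢ Ioi (0:ℝ)).indicator F p := by
        refine setLIntegral_congr_fun hS (fun ⦃p⦄ _ => ?_)
        by_cases hp : p ∈ Ioi (0:ℝ) ×ˢ Ioi (0:ℝ)
        · rw [indicator_of_mem hp]
        · rw [indicator_of_notMem hp, hFz p hp]
    _ = ∫⁻ p in (Ioi (0:ℝ) ×ˢ Ioi (0:ℝ)) ∩ S, F p := by
        rw [lintegral_indicator hQ, Measure.restrict_restrict hQ]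
    _ = ∫⁻ q in A ×ˢ Ioi 0, ENNReal.ofReal |(phiDer q).det| * F (phiMap q) := by
        rw [← himg]
        exact lintegral_image_eq_lintegral_abs_det_fderiv_mul volume hsrc hderiv hinj F
    _ = ∫⁻ q in A ×ˢ Ioi 0, ENNReal.ofReal |q.2| * F (phiMap q) := by
        simp_rw [phiDer_det]
    _ = ∫⁻ u in A, ∫⁻ s in Ioi 0, ENNReal.ofReal |s| * F (phiMap (u, s)) := by
        rw [MeasureTheory.Measure.volume_eq_prod, ← Measure.prod_restrict]
        refine lintegral_prod _ ?_
        apply Measurable.aemeasurable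
        exact (measurable_snd.abs.ennreal_ofReal).mul
          ((((measurable_gammaPdf a (1/2)).comp
              (measurable_snd.mul measurable_fst)).ennreal_ofReal).mul
            (((measurable_gammaPdf b (1/2)).comp
              (measurable_snd.mul (measurable_const.sub measurable_fst))).ennreal_ofReal))
    _ = ∫⁻ u in A, ENNReal.ofReal (betaPdf a b u) := by
        refine setLIntegral_congr_fun hA (fun ⦃u⦄ hu => ?_)
        obtain ⟨⟨hu0, hu1⟩, hut⟩ := hu
        have h1u : (0:ℝ) < 1 - u := by linarith
        have hGa := Real.Gamma_pos_of_pos ha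
        have hGb := Real.Gamma_pos_of_pos hb
        have hGab := Real.Gamma_pos_of_pos (by linarith : (0:ℝ) < a + b)
        set Cu : ℝ := ((1/2:ℝ) ^ a / Real.Gamma a) * ((1/2:ℝ) ^ b / Real.Gamma b)
          * u ^ (a-1) * (1-u) ^ (b-1) with hCu
        have hCu0 : 0 ≤ Cu := by positivity
        calc ∫⁻ s in Ioi 0, ENNReal.ofReal |s| * F (phiMap (u, s))
            = ∫⁻ s in Ioi 0, ENNReal.ofReal Cu
                * ENNReal.ofReal (s ^ (a+b-1) * Real.exp (-((1/2) * s))) := by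
              refine setLIntegral_congr_fun measurableSet_Ioi (fun ⦃s⦄ hs => ?_)
              have hs0 : (0:ℝ) < s := hs
              have hsu : (0:ℝ) < s * u := mul_pos hs0 hu0
              have hsv : (0:ℝ) < s * (1 - u) := mul_pos hs0 h1u
              simp only [hFdef, phiMap]
              rw [gammaPdf, if_pos hsu, gammaPdf, if_pos hsv, abs_of_pos hs0]
              rw [← ENNReal.ofReal_mul (by positivity), ← ENNReal.ofReal_mul hs0.le,
                ← ENNReal.ofReal_mul hCu0]
              congr 1
              have hss : s * (s ^ (a-1) * s ^ (b-1)) = s ^ (a+b-1) := by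
                nth_rewrite 1 [← Real.rpow_one s]
                rw [← Real.rpow_add hs0, ← Real.rpow_add hs0]
                congr 1; ring
              have hexp : Real.exp (-(1/2 * (s*u))) * Real.exp (-(1/2 * (s*(1-u))))
                  = Real.exp (-(1/2 * s)) := by
                rw [← Real.exp_add]; congr 1; ring
              rw [Real.mul_rpow hs0.le hu0.le, Real.mul_rpow hs0.le h1u.le, hCu,
                ← hss, ← hexp]
              ring
          _ = ENNReal.ofReal Cu
                * ENNReal.ofReal ((1/(1/2:ℝ)) ^ (a+b) * Real.Gamma (a+b)) := by
              rw [lintegral_const_mul' _ _ ENNReal.ofReal_ne_top,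
                lintegral_rpow_mul_exp (by linarith) (by norm_num)]
          _ = ENNReal.ofReal (betaPdf a b u) := by
              rw [← ENNReal.ofReal_mul hCu0]
              congr 1
              rw [betaPdf, if_pos ⟨hu0, hu1⟩, hCu]
              have h2 : (1/(1/2:ℝ)) = 2 := by norm_num
              rw [h2, Real.rpow_add (by norm_num : (0:ℝ) < 2)]
              symm
              have ha2 : (1/2:ℝ) ^ a * 2 ^ a = 1 := by
                rw [← Real.mul_rpow (by norm_num) (by norm_num)]
                norm_num
              have hb2 : (1/2:ℝ) ^ b * 2 ^ b = 1 := by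
                rw [← Real.mul_rpow (by norm_num) (by norm_num)]
                norm_num
              calc Real.Gamma (a+b) / (Real.Gamma a * Real.Gamma b)
                      * u ^ (a-1) * (1-u) ^ (b-1)
                  = ((1/2:ℝ) ^ a * 2 ^ a) * ((1/2:ℝ) ^ b * 2 ^ b)
                      * (Real.Gamma (a+b) / (Real.Gamma a * Real.Gamma b)
                        * u ^ (a-1) * (1-u) ^ (b-1)) := by
                    rw [ha2, hb2]; ring
                _ = (1/2:ℝ) ^ a / Real.Gamma a * ((1/2:ℝ) ^ b / Real.Gamma b)
                      * u ^ (a-1) * (1-u) ^ (b-1) * (2 ^ a * 2 ^ b * Real.Gamma (a+b)) := by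
                    field_simp
  -- RHS
    _ = ∫⁻ u in Iic t, ENNReal.ofReal (betaPdf a b u) := by
        have hBz : ∀ u : ℝ, u ∉ Ioo (0:ℝ) 1 → ENNReal.ofReal (betaPdf a b u) = 0 := by
          intro u hu
          rw [betaPdf, if_neg (by simpa [mem_Ioo] using hu), ENNReal.ofReal_zero]
        calc ∫⁻ u in A, ENNReal.ofReal (betaPdf a b u)
            = ∫⁻ u in Iic t, (Ioo (0:ℝ) 1).indicator
                (fun u => ENNReal.ofReal (betaPdf a b u)) u := by
              rw [lintegral_indicator measurableSet_Ioo, Measure.restrict_restrict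
                measurableSet_Ioo]
          _ = ∫⁻ u in Iic t, ENNReal.ofReal (betaPdf a b u) := by
              refine setLIntegral_congr_fun measurableSet_Iic (fun ⦃u⦄ _ => ?_)
              by_cases hu : u ∈ Ioo (0:ℝ) 1
              · rw [indicator_of_mem hu]
              · rw [indicator_of_notMem hu, hBz u hu]
    _ = (volume.withDensity fun x => ENNReal.ofReal (betaPdf a b x)) (Iic t) := by
        rw [withDensity_apply _ measurableSet_Iic]

/-- In the normal-gamma model, `β₁ = β₀/(1 − B)` where `B = K/(K + J₀) ~ Beta(n/2, α₀)`
(with `K = vH ~ χ²_n` and `J₀ = 2β₀v ~ χ²_{2α₀}` independent); hence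
`β₁ ≤ β₀/(1 − Beta(n/2, α₀, ξ))` with prior predictive probability `ξ`, where
`Beta(a, b, ξ)` denotes the `ξ`-quantile of the Beta distribution. -/
theorem beta_one_quantile_bound
    (n : ℕ) (hn : 0 < n) (α₀ β₀ ξ : ℝ) (hα : 0 < α₀) (hβ : 0 < β₀)
    (hξ0 : 0 < ξ) (hξ1 : ξ < 1)
    {Ω : Type*} [MeasureSpace Ω] [IsProbabilityMeasure (ℙ : Measure Ω)]
    (K J₀ : Ω → ℝ) (hKmeas : Measurable K) (hJmeas : Measurable J₀)
    (hKlaw : Measure.map K ℙ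
      = volume.withDensity (fun x => ENNReal.ofReal (gammaPdf ((n : ℝ) / 2) (1 / 2) x)))
    (hJlaw : Measure.map J₀ ℙ
      = volume.withDensity (fun x => ENNReal.ofReal (gammaPdf α₀ (1 / 2) x)))
    (hind : IndepFun K J₀ ℙ)
    (B β₁ : Ω → ℝ)
    (hB : ∀ ω, B ω = K ω / (K ω + J₀ ω))
    (hβ₁ : ∀ ω, β₁ ω = β₀ / (1 - B ω))
    (q : ℝ) (hq : ℙ {ω | B ω ≤ q} = ENNReal.ofReal ξ) :
    Measure.map B ℙ
      = volume.withDensity (fun x => ENNReal.ofReal (betaPdf ((n : ℝ) / 2) α₀ x)) ∧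
    ℙ {ω | β₁ ω ≤ β₀ / (1 - q)} = ENNReal.ofReal ξ := by
  have ha : (0:ℝ) < (n : ℝ) / 2 := by positivity
  have hBmeas : Measurable B := by
    have hBe : B = fun ω => K ω / (K ω + J₀ ω) := funext hB
    rw [hBe]; exact hKmeas.div (hKmeas.add hJmeas)
  haveI := Measure.isProbabilityMeasure_map (μ := ℙ) hBmeas.aemeasurable
  have hpair : Measure.map (fun ω => (K ω, J₀ ω)) ℙ
      = (volume.withDensity fun x => ENNReal.ofReal (gammaPdf ((n:ℝ)/2) (1/2) x)).prod
        (volume.withDensity fun x => ENNReal.ofReal (gammaPdf α₀ (1/2) x)) := by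
    rw [(indepFun_iff_map_prod_eq_prod_map_map hKmeas.aemeasurable hJmeas.aemeasurable).1 hind,
      hKlaw, hJlaw]
  have hlaw : Measure.map B ℙ
      = volume.withDensity (fun x => ENNReal.ofReal (betaPdf ((n : ℝ) / 2) α₀ x)) := by
    refine Measure.ext_of_Iic _ _ (fun t => ?_)
    have hS : MeasurableSet {p : ℝ × ℝ | p.1 / (p.1 + p.2) ≤ t} :=
      measurableSet_le (measurable_fst.div (measurable_fst.add measurable_snd)) measurable_const
    rw [Measure.map_apply hBmeas measurableSet_Iic]
    have hset : B ⁻¹' Iic t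
        = (fun ω => (K ω, J₀ ω)) ⁻¹' {p : ℝ × ℝ | p.1 / (p.1 + p.2) ≤ t} := by
      ext ω; simp [hB ω]
    rw [hset, ← Measure.map_apply (hKmeas.prodMk hJmeas) hS, hpair, key ha hα t]
  refine ⟨hlaw, ?_⟩
  have hq' : (volume.withDensity fun x => ENNReal.ofReal (betaPdf ((n:ℝ)/2) α₀ x)) (Iic q)
      = ENNReal.ofReal ξ := by
    rw [← hlaw, Measure.map_apply hBmeas measurableSet_Iic]
    exact hq
  have hq0 : 0 < q := by
    by_contra h
    push_neg at h
    have hz : (volume.withDensity fun x => ENNReal.ofReal (betaPdf ((n:ℝ)/2) α₀ x)) (Iic q)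
        = 0 := by
      rw [withDensity_apply _ measurableSet_Iic]
      rw [setLIntegral_congr_fun measurableSet_Iic (fun ⦃x⦄ hx =>
        show ENNReal.ofReal (betaPdf ((n:ℝ)/2) α₀ x) = 0 by
          rw [betaPdf, if_neg, ENNReal.ofReal_zero]
          rintro ⟨h1, -⟩
          have : x ≤ q := hx
          linarith)]
      simp
    rw [hz] at hq'
    have := ENNReal.ofReal_eq_zero.1 hq'.symm
    linarith
  have hq1 : q < 1 := by
    by_contra h
    push_neg at h
    have hIoi : (volume.withDensity fun x => ENNReal.ofReal (betaPdf ((n:ℝ)/2) α₀ x)) (Ioi q)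
        = 0 := by
      rw [withDensity_apply _ measurableSet_Ioi]
      rw [setLIntegral_congr_fun measurableSet_Ioi (fun ⦃x⦄ hx =>
        show ENNReal.ofReal (betaPdf ((n:ℝ)/2) α₀ x) = 0 by
          rw [betaPdf, if_neg, ENNReal.ofReal_zero]
          rintro ⟨-, h2⟩
          have : q < x := hx
          linarith)]
      simp
    have huniv : (volume.withDensity fun x => ENNReal.ofReal (betaPdf ((n:ℝ)/2) α₀ x)) univ
        = 1 := by
      rw [← hlaw]; exact measure_univ
    have hsplit : (volume.withDensity fun x => ENNReal.ofReal (betaPdf ((n:ℝ)/2) α₀ x)) (Iic q)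
        + (volume.withDensity fun x => ENNReal.ofReal (betaPdf ((n:ℝ)/2) α₀ x)) (Ioi q)
        = 1 := by
      rw [← measure_union (Iic_disjoint_Ioi le_rfl) measurableSet_Ioi, Iic_union_Ioi, huniv]
    rw [hq', hIoi, add_zero] at hsplit
    have := ENNReal.ofReal_lt_one.2 hξ1
    rw [hsplit] at this
    exact lt_irrefl _ this
  have hK0 : ℙ {ω | K ω ≤ 0} = 0 := by
    have he : {ω | K ω ≤ 0} = K ⁻¹' Iic 0 := rfl
    rw [he, ← Measure.map_apply hKmeas measurableSet_Iic, hKlaw,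
      withDensity_apply _ measurableSet_Iic]
    rw [setLIntegral_congr_fun measurableSet_Iic (fun ⦃x⦄ hx =>
      show ENNReal.ofReal (gammaPdf ((n:ℝ)/2) (1/2) x) = 0 by
        rw [gammaPdf, if_neg (not_lt.2 hx), ENNReal.ofReal_zero])]
    simp
  have hJ0 : ℙ {ω | J₀ ω ≤ 0} = 0 := by
    have he : {ω | J₀ ω ≤ 0} = J₀ ⁻¹' Iic 0 := rfl
    rw [he, ← Measure.map_apply hJmeas measurableSet_Iic, hJlaw,
      withDensity_apply _ measurableSet_Iic]
    rw [setLIntegral_congr_fun measurableSet_Iic (fun ⦃x⦄ hx =>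
      show ENNReal.ofReal (gammaPdf α₀ (1/2) x) = 0 by
        rw [gammaPdf, if_neg (not_lt.2 hx), ENNReal.ofReal_zero])]
    simp
  have haeK : ∀ᵐ ω ∂(ℙ : Measure Ω), 0 < K ω := by
    rw [ae_iff]
    simpa only [not_lt] using hK0
  have haeJ : ∀ᵐ ω ∂(ℙ : Measure Ω), 0 < J₀ ω := by
    rw [ae_iff]
    simpa only [not_lt] using hJ0
  have hsets : {ω | β₁ ω ≤ β₀ / (1 - q)} =ᵐ[(ℙ : Measure Ω)] {ω | B ω ≤ q} := by
    rw [Filter.eventuallyEq_set]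
    filter_upwards [haeK, haeJ] with ω hK hJ
    have hKJ : 0 < K ω + J₀ ω := by linarith
    have hB1 : B ω < 1 := by
      rw [hB ω, div_lt_one hKJ]; linarith
    rw [hβ₁ ω, div_le_div_iff₀ (by linarith) (by linarith)]
    constructor <;> intro h <;> nlinarith
  rw [measure_congr hsets, hq]
end
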